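/- Let $\kappa>0$. There exists a smooth even function $\hat\phi_\kappa:\mathbb R\to\mathbb R$ (i.e., $\hat\phi_\kappa(y)=\hat\phi_\kappa(-y)$) satisfying $\mathcal J_1\hat\phi_\kappa(y)=0$ for all $y\in\mathbb R$ together with the estimate $0\le\hat\phi_\kappa(y)-\kappa y\le\min\Big\{\frac{2e(\kappa+2)}{y}e^{-y^2/4},\,3\kappa+2\Big\}$ for every $y\in(0,\infty)$; in particular $\lim_{y\to\infty}\hat\phi_\kappa(y)/y=\kappa$. -/

import Mathlib

open Real MeasureTheory Set Filter Topology intervalIntegral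

/-- The one-dimensional self-expander operator
`𝒥₁ u (y) = u''/(1+u'^2) + (y/2) u' - u/2`. -/
noncomputable def J1 (u : ℝ → ℝ) (y : ℝ) : ℝ :=
  deriv (deriv u) y / (1 + (deriv u y) ^ 2) + y / 2 * deriv u y - u y / 2

namespace Stmt5Aux

/-- The asymptotic angle. -/
noncomputable def bb (κ : ℝ) : ℝ := Real.arctan κ

/-- `G v y = ∫_0^{max 0 y} (s/2)(1 + v(s)²)`. -/
noncomputable def Gv (v : ℝ → ℝ) (y : ℝ) : ℝ :=
  ∫ s in (0:ℝ)..(max 0 y), s / 2 * (1 + v s ^ 2)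

noncomputable def Ev (v : ℝ → ℝ) (s : ℝ) : ℝ := Real.exp (-(Gv v s))

noncomputable def Iv (v : ℝ → ℝ) : ℝ := ∫ s in Set.Ioi (0:ℝ), Ev v s

/-- The monotone fixed-point operator. -/
noncomputable def Tm (κ : ℝ) (v : ℝ → ℝ) (y : ℝ) : ℝ :=
  Real.tan (bb κ * (∫ s in (0:ℝ)..(max 0 y), Ev v s) / Iv v)

/-- Membership in the iteration space. -/
def Sv (κ : ℝ) (v : ℝ → ℝ) : Prop := Measurable v ∧ ∀ y, 0 ≤ v y ∧ v y ≤ κ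

variable {κ : ℝ} {v w : ℝ → ℝ}

lemma bb_pos (hκ : 0 < κ) : 0 < bb κ := by
  have := Real.arctan_strictMono hκ
  rwa [Real.arctan_zero] at this

lemma bb_lt : bb κ < π / 2 := Real.arctan_lt_pi_div_two κ

lemma tan_bb : Real.tan (bb κ) = κ := Real.tan_arctan κ

lemma Gv_integrand_meas (hv : Sv κ v) :
    Measurable fun s : ℝ => s / 2 * (1 + v s ^ 2) := by
  have := hv.1
  fun_prop

lemma Gv_integrand_intInt (hv : Sv κ v) (a b : ℝ) :
    IntervalIntegrable (fun s : ℝ => s / 2 * (1 + v s ^ 2)) volume a b := by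
  rw [intervalIntegrable_iff]
  apply Measure.integrableOn_of_bounded (μ := volume) (s := Set.uIoc a b)
    (M := (max |a| |b|) / 2 * (1 + κ ^ 2)) (measure_Ioc_lt_top).ne
    (Gv_integrand_meas hv).aestronglyMeasurable
  refine (ae_restrict_iff' measurableSet_uIoc).2 (ae_of_all _ fun s hs => ?_)
  obtain ⟨h1, h2⟩ := hs
  have hs1 : |s| ≤ max |a| |b| := by
    rw [abs_le]
    constructor
    · refine le_trans ?_ h1.le
      exact le_min (le_trans (neg_le_neg (le_max_left _ _)) (neg_abs_le a))
        (le_trans (neg_le_neg (le_max_right _ _)) (neg_abs_le b))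
    · exact le_trans h2 (max_le_max (le_abs_self a) (le_abs_self b))
  have hv0 := (hv.2 s).1
  have hvκ := (hv.2 s).2
  have h2 : 0 ≤ 1 + v s ^ 2 := by positivity
  have h3 : 1 + v s ^ 2 ≤ 1 + κ ^ 2 := by nlinarith
  have h4 : (0:ℝ) ≤ 1 + κ ^ 2 := by positivity
  rw [Real.norm_eq_abs, abs_mul, abs_div, abs_two, abs_of_nonneg h2]
  gcongr <;> first | exact hs1 | linarith

lemma Gv_nonneg (hv : Sv κ v) (y : ℝ) : 0 ≤ Gv v y := by
  apply intervalIntegral.integral_nonneg (le_max_left 0 y)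
  intro u hu
  have : 0 ≤ u := hu.1
  positivity

lemma Gv_ge (hv : Sv κ v) (y : ℝ) : (max 0 y) ^ 2 / 4 ≤ Gv v y := by
  have h1 : (∫ s in (0:ℝ)..(max 0 y), s / 2) ≤ Gv v y := by
    apply intervalIntegral.integral_mono_on (le_max_left 0 y)
      (by apply Continuous.intervalIntegrable; fun_prop)
      (Gv_integrand_intInt hv 0 (max 0 y))
    intro x hx
    have h2 : 0 ≤ v x ^ 2 := sq_nonneg _
    have h3 : 0 ≤ x := hx.1
    nlinarith
  have h2 : (∫ s in (0:ℝ)..(max 0 y), s / 2) = (max 0 y) ^ 2 / 4 := by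
    rw [_root_.intervalIntegral.integral_div, integral_id]
    ring
  linarith

lemma Gv_le (hv : Sv κ v) (y : ℝ) : Gv v y ≤ (1 + κ ^ 2) * (max 0 y) ^ 2 / 4 := by
  have h1 : Gv v y ≤ ∫ s in (0:ℝ)..(max 0 y), s / 2 * (1 + κ ^ 2) := by
    apply intervalIntegral.integral_mono_on (le_max_left 0 y)
      (Gv_integrand_intInt hv 0 (max 0 y))
      (by apply Continuous.intervalIntegrable; fun_prop)
    intro x hx
    have h2 := (hv.2 x).1
    have h3 := (hv.2 x).2
    have h4 : 0 ≤ x := hx.1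
    have hsq : v x ^ 2 ≤ κ ^ 2 := by nlinarith
    have := mul_le_mul_of_nonneg_left (by linarith : 1 + v x ^ 2 ≤ 1 + κ ^ 2)
      (by linarith : (0:ℝ) ≤ x / 2)
    linarith
  have h2 : (∫ s in (0:ℝ)..(max 0 y), s / 2 * (1 + κ ^ 2)) = (1 + κ ^ 2) * (max 0 y) ^ 2 / 4 := by
    rw [_root_.intervalIntegral.integral_mul_const, _root_.intervalIntegral.integral_div, integral_id]
    ring
  linarith

lemma Ev_pos (y : ℝ) : 0 < Ev v y := Real.exp_pos _

lemma Ev_le_one (hv : Sv κ v) (y : ℝ) : Ev v y ≤ 1 := by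
  rw [Ev, Real.exp_le_one_iff, neg_nonpos]
  exact Gv_nonneg hv y

lemma Ev_le_gauss (hv : Sv κ v) {s : ℝ} (hs : 0 ≤ s) :
    Ev v s ≤ Real.exp (-(1/4) * s ^ 2) := by
  rw [Ev, Real.exp_le_exp]
  have := Gv_ge hv s
  rw [max_eq_right hs] at this
  linarith

lemma Ev_ge_gauss (hv : Sv κ v) (s : ℝ) :
    Real.exp (-((1 + κ ^ 2)/4) * s ^ 2) ≤ Ev v s := by
  rcases le_or_gt 0 s with hs | hs
  · rw [Ev, Real.exp_le_exp]
    have := Gv_le hv s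
    rw [max_eq_right hs] at this
    linarith
  · have : Gv v s = 0 := by
      rw [Gv, max_eq_left hs.le, intervalIntegral.integral_same]
    rw [Ev, this, neg_zero, Real.exp_zero, Real.exp_le_one_iff]
    have h2 : 0 ≤ (1 + κ ^ 2) / 4 * s ^ 2 := by positivity
    linarith

lemma Gv_cont (hv : Sv κ v) : Continuous (Gv v) := by
  have h := intervalIntegral.continuous_primitive (fun a b => Gv_integrand_intInt hv a b) 0
  exact h.comp (continuous_const.max continuous_id)

lemma Ev_cont (hv : Sv κ v) : Continuous (Ev v) :=
  Real.continuous_exp.comp (Gv_cont hv).neg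

lemma gauss_integrableOn (c : ℝ) (hc : 0 < c) (y : ℝ) :
    IntegrableOn (fun s : ℝ => Real.exp (-c * s ^ 2)) (Set.Ioi y) volume :=
  (integrable_exp_neg_mul_sq hc).integrableOn

lemma Ev_integrableOn (hv : Sv κ v) {y : ℝ} (hy : 0 ≤ y) :
    IntegrableOn (Ev v) (Set.Ioi y) volume := by
  apply Integrable.mono (g := fun s => Real.exp (-(1/4) * s ^ 2))
    (gauss_integrableOn (1/4) (by norm_num) y)
    ((Ev_cont hv).aestronglyMeasurable)
  refine (ae_restrict_iff' measurableSet_Ioi).2 (ae_of_all _ fun s hs => ?_)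
  rw [Real.norm_eq_abs, Real.norm_eq_abs, abs_of_pos (Ev_pos s), abs_of_pos (Real.exp_pos _)]
  exact Ev_le_gauss hv (le_trans hy (le_of_lt hs))

lemma sqrt_four : Real.sqrt 4 = 2 := by
  rw [show (4:ℝ) = 2 ^ 2 by norm_num, Real.sqrt_sq (by norm_num : (0:ℝ) ≤ 2)]

lemma Iv_ge (hv : Sv κ v) : Real.sqrt (π / (1 + κ ^ 2)) ≤ Iv v := by
  have h0 : (0:ℝ) < (1 + κ ^ 2) / 4 := by positivity
  have h1 : (∫ s in Set.Ioi (0:ℝ), Real.exp (-((1 + κ ^ 2)/4) * s ^ 2)) ≤ Iv v := by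
    apply setIntegral_mono_on (gauss_integrableOn _ h0 0) (Ev_integrableOn hv le_rfl)
      measurableSet_Ioi
    intro s _
    exact Ev_ge_gauss hv s
  have h2 : (∫ s in Set.Ioi (0:ℝ), Real.exp (-((1 + κ ^ 2)/4) * s ^ 2))
      = Real.sqrt (π / ((1 + κ ^ 2)/4)) / 2 := integral_gaussian_Ioi _
  have h3 : Real.sqrt (π / ((1 + κ ^ 2)/4)) / 2 = Real.sqrt (π / (1 + κ ^ 2)) := by
    rw [show π / ((1 + κ ^ 2)/4) = 4 * (π / (1 + κ ^ 2)) by field_simp]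
    rw [Real.sqrt_mul (by norm_num : (0:ℝ) ≤ 4), sqrt_four]
    ring
  rw [h2, h3] at h1
  exact h1

lemma Iv_pos (hv : Sv κ v) : 0 < Iv v := by
  have h1 : (0:ℝ) < Real.sqrt (π / (1 + κ ^ 2)) := by
    apply Real.sqrt_pos.2
    positivity
  linarith [Iv_ge hv]

lemma Iv_le (hv : Sv κ v) : Iv v ≤ Real.sqrt π := by
  have h1 : Iv v ≤ ∫ s in Set.Ioi (0:ℝ), Real.exp (-(1/4) * s ^ 2) := by
    apply setIntegral_mono_on (Ev_integrableOn hv le_rfl)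
      (gauss_integrableOn _ (by norm_num) 0) measurableSet_Ioi
    intro s hs
    exact Ev_le_gauss hv (le_of_lt hs)
  have h2 : (∫ s in Set.Ioi (0:ℝ), Real.exp (-(1/4) * s ^ 2))
      = Real.sqrt (π / (1/4)) / 2 := integral_gaussian_Ioi _
  have h3 : Real.sqrt (π / (1/4)) / 2 = Real.sqrt π := by
    rw [show π / (1/4:ℝ) = 4 * π by ring, Real.sqrt_mul (by norm_num : (0:ℝ) ≤ 4), sqrt_four]
    ring
  rw [h2, h3] at h1
  exact h1



lemma Ev_intInt (hv : Sv κ v) (a b : ℝ) : IntervalIntegrable (Ev v) volume a b :=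
  (Ev_cont hv).intervalIntegrable a b

lemma prim_nonneg (y : ℝ) : 0 ≤ ∫ s in (0:ℝ)..(max 0 y), Ev v s :=
  intervalIntegral.integral_nonneg (le_max_left 0 y) (fun u _ => (Ev_pos u).le)

lemma prim_le_Iv (hv : Sv κ v) (y : ℝ) : (∫ s in (0:ℝ)..(max 0 y), Ev v s) ≤ Iv v := by
  rw [intervalIntegral.integral_of_le (le_max_left 0 y)]
  apply setIntegral_mono_set (Ev_integrableOn hv le_rfl)
    (ae_of_all _ fun s => (Ev_pos s).le)
  exact HasSubset.Subset.eventuallyLE Set.Ioc_subset_Ioi_self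

lemma Tm_arg_mem (hκ : 0 < κ) (hv : Sv κ v) (y : ℝ) :
    bb κ * (∫ s in (0:ℝ)..(max 0 y), Ev v s) / Iv v ∈ Set.Icc 0 (bb κ) := by
  have hIv := Iv_pos hv
  have hb := bb_pos hκ
  have hp := prim_nonneg (v := v) y
  constructor
  · positivity
  · rw [mul_div_assoc]
    have h1 : (∫ s in (0:ℝ)..(max 0 y), Ev v s) / Iv v ≤ 1 :=
      (div_le_one hIv).2 (prim_le_Iv hv y)
    nlinarith

lemma cos_pos_of_mem_Icc_bb {θ : ℝ} (hθ : θ ∈ Set.Icc 0 (bb κ)) : 0 < Real.cos θ := by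
  apply Real.cos_pos_of_mem_Ioo
  constructor
  · have := Real.pi_pos
    linarith [hθ.1]
  · exact lt_of_le_of_lt hθ.2 bb_lt

lemma mem_Ioo_of_mem_Icc_bb {θ : ℝ} (hθ : θ ∈ Set.Icc 0 (bb κ)) :
    θ ∈ Set.Ioo (-(π/2)) (π/2) := by
  constructor
  · have := Real.pi_pos
    linarith [hθ.1]
  · exact lt_of_le_of_lt hθ.2 bb_lt

lemma Tm_mem (hκ : 0 < κ) (hv : Sv κ v) (y : ℝ) : 0 ≤ Tm κ v y ∧ Tm κ v y ≤ κ := by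
  have hmem := Tm_arg_mem hκ hv y
  constructor
  · apply Real.tan_nonneg_of_nonneg_of_le_pi_div_two hmem.1
    exact le_of_lt (lt_of_le_of_lt hmem.2 bb_lt)
  · have h1 : Real.tan (bb κ * (∫ s in (0:ℝ)..(max 0 y), Ev v s) / Iv v) ≤ Real.tan (bb κ) := by
      apply Real.strictMonoOn_tan.monotoneOn (mem_Ioo_of_mem_Icc_bb hmem)
        (mem_Ioo_of_mem_Icc_bb (Set.right_mem_Icc.2 (bb_pos hκ).le)) hmem.2
    rwa [tan_bb] at h1

set_option maxHeartbeats 1000000 in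
lemma Tm_cont (hκ : 0 < κ) (hv : Sv κ v) : Continuous (Tm κ v) := by
  have hprim : Continuous fun y : ℝ => ∫ s in (0:ℝ)..(max 0 y), Ev v s :=
    (intervalIntegral.continuous_primitive (fun a b => Ev_intInt hv a b) 0).comp
      (continuous_const.max continuous_id)
  have hargc : Continuous fun y : ℝ => bb κ * (∫ s in (0:ℝ)..(max 0 y), Ev v s) / Iv v :=
    (continuous_const.mul hprim).div_const _
  refine continuous_iff_continuousAt.2 fun y => ?_
  have h1 : ContinuousAt Real.tan (bb κ * (∫ s in (0:ℝ)..(max 0 y), Ev v s) / Iv v) :=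
    Real.continuousAt_tan.2 (ne_of_gt (cos_pos_of_mem_Icc_bb (Tm_arg_mem hκ hv y)))
  exact ContinuousAt.comp (g := Real.tan) h1 hargc.continuousAt

lemma Sv_Tm (hκ : 0 < κ) (hv : Sv κ v) : Sv κ (Tm κ v) :=
  ⟨(Tm_cont hκ hv).measurable, Tm_mem hκ hv⟩

lemma Gv_diff_mono (hw : Sv κ w) (hv : Sv κ v) (hwv : ∀ u, w u ≤ v u)
    {t s : ℝ} (ht : 0 ≤ t) (hts : t ≤ s) :
    Gv v t - Gv w t ≤ Gv v s - Gv w s := by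
  have hs : 0 ≤ s := le_trans ht hts
  have hGv : Gv v s - Gv v t = ∫ u in t..s, u / 2 * (1 + v u ^ 2) := by
    rw [Gv, Gv, max_eq_right hs, max_eq_right ht]
    exact intervalIntegral.integral_interval_sub_left
      (Gv_integrand_intInt hv 0 s) (Gv_integrand_intInt hv 0 t)
  have hGw : Gv w s - Gv w t = ∫ u in t..s, u / 2 * (1 + w u ^ 2) := by
    rw [Gv, Gv, max_eq_right hs, max_eq_right ht]
    exact intervalIntegral.integral_interval_sub_left
      (Gv_integrand_intInt hw 0 s) (Gv_integrand_intInt hw 0 t)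
  have hmono : (∫ u in t..s, u / 2 * (1 + w u ^ 2)) ≤ ∫ u in t..s, u / 2 * (1 + v u ^ 2) := by
    apply intervalIntegral.integral_mono_on hts
      (Gv_integrand_intInt hw t s) (Gv_integrand_intInt hv t s)
    intro x hx
    have hx0 : 0 ≤ x := le_trans ht hx.1
    have h1 := (hw.2 x).1
    have h2 := hwv x
    have hsq : w x ^ 2 ≤ v x ^ 2 := by nlinarith
    have := mul_le_mul_of_nonneg_left (by linarith : 1 + w x ^ 2 ≤ 1 + v x ^ 2)
      (by linarith : (0:ℝ) ≤ x / 2)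
    linarith
  linarith

lemma Tm_mono (hκ : 0 < κ) (hw : Sv κ w) (hv : Sv κ v) (hwv : ∀ u, w u ≤ v u) (y : ℝ) :
    Tm κ w y ≤ Tm κ v y := by
  set m := max 0 y with hm
  have hm0 : (0:ℝ) ≤ m := le_max_left 0 y
  -- cross inequality
  have cross : ∀ t s : ℝ, 0 ≤ t → t ≤ m → m < s → Ev w t * Ev v s ≤ Ev v t * Ev w s := by
    intro t s ht htm hms
    rw [Ev, Ev, Ev, Ev, ← Real.exp_add, ← Real.exp_add, Real.exp_le_exp]
    have := Gv_diff_mono hw hv hwv ht (le_trans htm hms.le)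
    linarith
  have hIoc_w : IntegrableOn (Ev w) (Set.Ioc 0 m) volume :=
    (Ev_integrableOn hw le_rfl).mono_set Set.Ioc_subset_Ioi_self
  have hIoc_v : IntegrableOn (Ev v) (Set.Ioc 0 m) volume :=
    (Ev_integrableOn hv le_rfl).mono_set Set.Ioc_subset_Ioi_self
  have hIoi_w : IntegrableOn (Ev w) (Set.Ioi m) volume := Ev_integrableOn hw hm0
  have hIoi_v : IntegrableOn (Ev v) (Set.Ioi m) volume := Ev_integrableOn hv hm0
  have step1 : ∀ s ∈ Set.Ioi m,
      (∫ t in Set.Ioc 0 m, Ev w t) * Ev v s ≤ (∫ t in Set.Ioc 0 m, Ev v t) * Ev w s := by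
    intro s hs
    rw [← MeasureTheory.integral_mul_const, ← MeasureTheory.integral_mul_const]
    apply setIntegral_mono_on (hIoc_w.mul_const _) (hIoc_v.mul_const _) measurableSet_Ioc
    intro t ht
    exact cross t s ht.1.le ht.2 hs
  have step2 : (∫ t in Set.Ioc 0 m, Ev w t) * (∫ s in Set.Ioi m, Ev v s)
      ≤ (∫ t in Set.Ioc 0 m, Ev v t) * (∫ s in Set.Ioi m, Ev w s) := by
    rw [← MeasureTheory.integral_const_mul, ← MeasureTheory.integral_const_mul]
    apply setIntegral_mono_on (hIoi_v.const_mul _) (hIoi_w.const_mul _) measurableSet_Ioi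
    exact step1
  have hsplit : ∀ x : ℝ → ℝ, IntegrableOn (Ev x) (Set.Ioi 0) volume →
      Iv x = (∫ t in Set.Ioc 0 m, Ev x t) + ∫ s in Set.Ioi m, Ev x s := by
    intro x hx
    rw [Iv, ← Set.Ioc_union_Ioi_eq_Ioi hm0]
    exact setIntegral_union Set.Ioc_disjoint_Ioi_same measurableSet_Ioi
      (hx.mono_set Set.Ioc_subset_Ioi_self) (hx.mono_set (Set.Ioi_subset_Ioi hm0))
  have hIw := Iv_pos hw
  have hIv := Iv_pos hv
  have hdiv : (∫ s in (0:ℝ)..m, Ev w s) / Iv w ≤ (∫ s in (0:ℝ)..m, Ev v s) / Iv v := by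
    rw [div_le_div_iff₀ hIw hIv, intervalIntegral.integral_of_le hm0,
      intervalIntegral.integral_of_le hm0, hsplit w (Ev_integrableOn hw le_rfl),
      hsplit v (Ev_integrableOn hv le_rfl)]
    nlinarith [step2]
  have hb := bb_pos hκ
  have harg : bb κ * (∫ s in (0:ℝ)..m, Ev w s) / Iv w
      ≤ bb κ * (∫ s in (0:ℝ)..m, Ev v s) / Iv v := by
    rw [mul_div_assoc, mul_div_assoc]
    nlinarith
  exact Real.strictMonoOn_tan.monotoneOn
    (mem_Ioo_of_mem_Icc_bb (Tm_arg_mem hκ hw y)) (mem_Ioo_of_mem_Icc_bb (Tm_arg_mem hκ hv y)) harg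

/-- The Picard-style iteration. -/
noncomputable def it (κ : ℝ) : ℕ → ℝ → ℝ
  | 0 => fun _ => 0
  | n + 1 => Tm κ (it κ n)

lemma it_Sv (hκ : 0 < κ) : ∀ n, Sv κ (it κ n) := by
  intro n
  induction n with
  | zero => exact ⟨measurable_const, fun y => ⟨le_rfl, hκ.le⟩⟩
  | succ n ih => exact Sv_Tm hκ ih

lemma it_mono_succ (hκ : 0 < κ) : ∀ n y, it κ n y ≤ it κ (n + 1) y := by
  intro n
  induction n with
  | zero => exact fun y => (Tm_mem hκ (it_Sv hκ 0) y).1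
  | succ n ih => exact fun y => Tm_mono hκ (it_Sv hκ n) (it_Sv hκ (n+1)) ih y

/-- The fixed point. -/
noncomputable def vinf (κ : ℝ) (y : ℝ) : ℝ := ⨆ n, it κ n y

lemma it_bddAbove (hκ : 0 < κ) (y : ℝ) : BddAbove (Set.range fun n => it κ n y) := by
  refine ⟨κ, ?_⟩
  rintro _ ⟨n, rfl⟩
  exact ((it_Sv hκ n).2 y).2

lemma it_tendsto (hκ : 0 < κ) (y : ℝ) :
    Tendsto (fun n => it κ n y) atTop (𝓝 (vinf κ y)) :=
  tendsto_atTop_ciSup (monotone_nat_of_le_succ (fun n => it_mono_succ hκ n y)) (it_bddAbove hκ y)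

lemma vinf_Sv (hκ : 0 < κ) : Sv κ (vinf κ) := by
  constructor
  · exact measurable_of_tendsto_metrizable (fun n => (it_Sv hκ n).1)
      (tendsto_pi_nhds.2 (it_tendsto hκ))
  · intro y
    constructor
    · have h0 : it κ 0 y ≤ vinf κ y := le_ciSup (it_bddAbove hκ y) 0
      simpa [it] using h0
    · exact ciSup_le fun n => ((it_Sv hκ n).2 y).2

lemma vinf_fix (hκ : 0 < κ) : ∀ y, Tm κ (vinf κ) y = vinf κ y := by
  intro y
  have hSinf := vinf_Sv hκ
  have h1 : Tendsto (fun n => it κ (n + 1) y) atTop (𝓝 (vinf κ y)) :=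
    (it_tendsto hκ y).comp (tendsto_add_atTop_nat 1)
  suffices h2 : Tendsto (fun n => Tm κ (it κ n) y) atTop (𝓝 (Tm κ (vinf κ) y)) by
    exact tendsto_nhds_unique h2 h1
  -- convergence of Gv
  have hG : ∀ s : ℝ, Tendsto (fun n => Gv (it κ n) s) atTop (𝓝 (Gv (vinf κ) s)) := by
    intro s
    apply intervalIntegral.tendsto_integral_filter_of_dominated_convergence
      (bound := fun t => |t| / 2 * (1 + κ ^ 2))
    · exact Eventually.of_forall fun n =>
        (Gv_integrand_meas (it_Sv hκ n)).aestronglyMeasurable.restrict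
    · refine Eventually.of_forall fun n => ae_of_all _ fun t _ => ?_
      have h1 := ((it_Sv hκ n).2 t).1
      have h2 := ((it_Sv hκ n).2 t).2
      have h3 : 0 ≤ 1 + it κ n t ^ 2 := by positivity
      rw [Real.norm_eq_abs, abs_mul, abs_div, abs_two, abs_of_nonneg h3]
      gcongr
    · exact (by fun_prop : Continuous fun t : ℝ => |t| / 2 * (1 + κ ^ 2)).intervalIntegrable _ _
    · refine ae_of_all _ fun t _ => ?_
      have hcomp : Tendsto (fun x : ℝ => t / 2 * (1 + x ^ 2)) (𝓝 (vinf κ t))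
          (𝓝 (t / 2 * (1 + vinf κ t ^ 2))) :=
        Continuous.tendsto (by fun_prop) _
      exact hcomp.comp (it_tendsto hκ t)
  have hE : ∀ s : ℝ, Tendsto (fun n => Ev (it κ n) s) atTop (𝓝 (Ev (vinf κ) s)) :=
    fun s => (Real.continuous_exp.tendsto _).comp ((hG s).neg)
  have hPrim : Tendsto (fun n => ∫ s in (0:ℝ)..(max 0 y), Ev (it κ n) s) atTop
      (𝓝 (∫ s in (0:ℝ)..(max 0 y), Ev (vinf κ) s)) := by
    apply intervalIntegral.tendsto_integral_filter_of_dominated_convergence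
      (bound := fun _ => (1:ℝ))
    · exact Eventually.of_forall fun n => (Ev_cont (it_Sv hκ n)).aestronglyMeasurable.restrict
    · refine Eventually.of_forall fun n => ae_of_all _ fun t _ => ?_
      rw [Real.norm_eq_abs, abs_of_pos (Ev_pos t)]
      exact Ev_le_one (it_Sv hκ n) t
    · exact intervalIntegrable_const
    · exact ae_of_all _ fun t _ => hE t
  have hI : Tendsto (fun n => Iv (it κ n)) atTop (𝓝 (Iv (vinf κ))) := by
    apply MeasureTheory.tendsto_integral_of_dominated_convergence
      (bound := fun s => Real.exp (-(1/4) * s ^ 2))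
    · exact fun n => (Ev_cont (it_Sv hκ n)).aestronglyMeasurable.restrict
    · exact (gauss_integrableOn (1/4) (by norm_num) 0)
    · intro n
      refine (ae_restrict_iff' measurableSet_Ioi).2 (ae_of_all _ fun s hs => ?_)
      rw [Real.norm_eq_abs, abs_of_pos (Ev_pos s)]
      exact Ev_le_gauss (it_Sv hκ n) hs.le
    · exact ae_of_all _ fun s => hE s
  have harg : Tendsto (fun n => bb κ * (∫ s in (0:ℝ)..(max 0 y), Ev (it κ n) s) / Iv (it κ n))
      atTop (𝓝 (bb κ * (∫ s in (0:ℝ)..(max 0 y), Ev (vinf κ) s) / Iv (vinf κ))) :=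
    (hPrim.const_mul (bb κ)).div hI (ne_of_gt (Iv_pos hSinf))
  exact ((Real.continuousAt_tan.2 (ne_of_gt (cos_pos_of_mem_Icc_bb
    (Tm_arg_mem hκ hSinf y)))).tendsto.comp harg)

lemma vinf_cont (hκ : 0 < κ) : Continuous (vinf κ) := by
  have h := Tm_cont hκ (vinf_Sv hκ)
  rwa [show Tm κ (vinf κ) = vinf κ from funext (vinf_fix hκ)] at h



/-! ### Part 2: the global even solution -/

noncomputable def II (κ : ℝ) : ℝ := Iv (vinf κ)
noncomputable def cc (κ : ℝ) : ℝ := 2 * bb κ / II κ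
noncomputable def GG (κ : ℝ) (y : ℝ) : ℝ := ∫ s in (0:ℝ)..y, s / 2 * (1 + vinf κ |s| ^ 2)
noncomputable def EE (κ : ℝ) (y : ℝ) : ℝ := Real.exp (-(GG κ y))
noncomputable def AA (κ : ℝ) (y : ℝ) : ℝ := cc κ / 2 * ∫ s in (0:ℝ)..y, EE κ s
noncomputable def VV (κ : ℝ) (y : ℝ) : ℝ := Real.tan (AA κ y)
noncomputable def FF (κ : ℝ) (y : ℝ) : ℝ := cc κ * EE κ y
noncomputable def phiK (κ : ℝ) (y : ℝ) : ℝ := FF κ y + y * VV κ y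

variable (hκ : 0 < κ)
include hκ

lemma GG_integrand_cont : Continuous fun s : ℝ => s / 2 * (1 + vinf κ |s| ^ 2) := by
  have h := vinf_cont hκ
  fun_prop

lemma GG_intInt (a b : ℝ) :
    IntervalIntegrable (fun s : ℝ => s / 2 * (1 + vinf κ |s| ^ 2)) volume a b :=
  (GG_integrand_cont hκ).intervalIntegrable a b

lemma GG_eq {y : ℝ} (hy : 0 ≤ y) : GG κ y = Gv (vinf κ) y := by
  rw [GG, Gv, max_eq_right hy]
  apply intervalIntegral.integral_congr
  intro s hs
  rw [Set.uIcc_of_le hy] at hs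
  simp [abs_of_nonneg hs.1]

lemma GG_even (y : ℝ) : GG κ (-y) = GG κ y := by
  set f : ℝ → ℝ := fun s => s / 2 * (1 + vinf κ |s| ^ 2) with hf
  have h1 : (∫ x in (0:ℝ)..y, f (-x)) = ∫ x in (-y)..(0:ℝ), f x := by
    have h := intervalIntegral.integral_comp_neg (a := (0:ℝ)) (b := y) f
    simpa using h
  have h2 : (∫ x in (0:ℝ)..y, f (-x)) = -∫ x in (0:ℝ)..y, f x := by
    have heq : (fun x : ℝ => f (-x)) = fun x => -(f x) := by
      funext x
      simp only [hf, abs_neg]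
      ring
    rw [heq, intervalIntegral.integral_neg]
  have h3 : (∫ x in (0:ℝ)..(-y), f x) = -∫ x in (-y)..(0:ℝ), f x :=
    intervalIntegral.integral_symm _ _
  show (∫ x in (0:ℝ)..(-y), f x) = ∫ x in (0:ℝ)..y, f x
  rw [h3, ← h1, h2]
  ring

lemma GG_nonneg (y : ℝ) : 0 ≤ GG κ y := by
  rcases le_or_gt 0 y with hy | hy
  · rw [GG_eq hκ hy]; exact Gv_nonneg (vinf_Sv hκ) y
  · rw [show y = -(-y) by ring, GG_even hκ]
    rw [GG_eq hκ (by linarith)]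
    exact Gv_nonneg (vinf_Sv hκ) (-y)

lemma GG_ge (y : ℝ) : y ^ 2 / 4 ≤ GG κ y := by
  rcases le_or_gt 0 y with hy | hy
  · rw [GG_eq hκ hy]
    have := Gv_ge (vinf_Sv hκ) y
    rwa [max_eq_right hy] at this
  · rw [show y = -(-y) by ring, GG_even hκ]
    rw [GG_eq hκ (by linarith)]
    have := Gv_ge (vinf_Sv hκ) (-y)
    rw [max_eq_right (by linarith : (0:ℝ) ≤ -y)] at this
    calc (-(-y)) ^ 2 / 4 = (-y) ^ 2 / 4 := by ring
    _ ≤ _ := this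

lemma GG_cont : Continuous (GG κ) :=
  intervalIntegral.continuous_primitive (fun a b => GG_intInt hκ a b) 0

lemma EE_pos (y : ℝ) : 0 < EE κ y := Real.exp_pos _

lemma EE_even (y : ℝ) : EE κ (-y) = EE κ y := by rw [EE, EE, GG_even hκ]

lemma EE_cont : Continuous (EE κ) := Real.continuous_exp.comp (GG_cont hκ).neg

lemma EE_eq {s : ℝ} (hs : 0 ≤ s) : EE κ s = Ev (vinf κ) s := by rw [EE, Ev, GG_eq hκ hs]

lemma EE_le_gauss (s : ℝ) : EE κ s ≤ Real.exp (-(1/4) * s ^ 2) := by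
  rw [EE, Real.exp_le_exp]
  have := GG_ge hκ s
  linarith

lemma EE_intInt (a b : ℝ) : IntervalIntegrable (EE κ) volume a b :=
  (EE_cont hκ).intervalIntegrable a b

lemma EE_integrableOn (y : ℝ) : IntegrableOn (EE κ) (Set.Ioi y) volume := by
  apply Integrable.mono (g := fun s => Real.exp (-(1/4) * s ^ 2))
    (gauss_integrableOn (1/4) (by norm_num) y) ((EE_cont hκ).aestronglyMeasurable)
  refine (ae_restrict_iff' measurableSet_Ioi).2 (ae_of_all _ fun s _ => ?_)
  rw [Real.norm_eq_abs, Real.norm_eq_abs, abs_of_pos (EE_pos hκ s), abs_of_pos (Real.exp_pos _)]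
  exact EE_le_gauss hκ s

lemma II_eq : (∫ s in Set.Ioi (0:ℝ), EE κ s) = II κ := by
  rw [II, Iv]
  exact setIntegral_congr_fun measurableSet_Ioi (fun s hs => EE_eq hκ (le_of_lt hs))

lemma II_pos : 0 < II κ := Iv_pos (vinf_Sv hκ)

lemma cc_pos : 0 < cc κ := by
  rw [cc]
  exact div_pos (by linarith [bb_pos hκ]) (II_pos hκ)

lemma AA_eq_arg {y : ℝ} (hy : 0 ≤ y) :
    AA κ y = bb κ * (∫ s in (0:ℝ)..(max 0 y), Ev (vinf κ) s) / II κ := by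
  rw [AA, cc]
  have h1 : (∫ s in (0:ℝ)..y, EE κ s) = ∫ s in (0:ℝ)..(max 0 y), Ev (vinf κ) s := by
    rw [max_eq_right hy]
    apply intervalIntegral.integral_congr
    intro s hs
    rw [Set.uIcc_of_le hy] at hs
    exact EE_eq hκ hs.1
  rw [h1]
  field_simp

lemma VV_eq_vinf {y : ℝ} (hy : 0 ≤ y) : VV κ y = vinf κ y := by
  rw [VV, AA_eq_arg hκ hy, II]
  exact vinf_fix hκ y

lemma AA_odd (y : ℝ) : AA κ (-y) = -AA κ y := by
  have h1 : (∫ x in (0:ℝ)..y, EE κ (-x)) = ∫ x in (-y)..(-(0:ℝ)), EE κ x :=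
    intervalIntegral.integral_comp_neg (EE κ)
  have h2 : (∫ x in (0:ℝ)..y, EE κ (-x)) = ∫ x in (0:ℝ)..y, EE κ x := by
    apply intervalIntegral.integral_congr
    intro s _
    exact EE_even hκ s
  rw [h2, show (-(0:ℝ)) = 0 from neg_zero] at h1
  have h3 : (∫ x in (0:ℝ)..(-y), EE κ x) = -∫ x in (-y)..(0:ℝ), EE κ x :=
    intervalIntegral.integral_symm _ _
  rw [AA, AA, h3, ← h1]
  ring

lemma AA_mem {y : ℝ} (hy : 0 ≤ y) : AA κ y ∈ Set.Icc 0 (bb κ) := by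
  rw [AA_eq_arg hκ hy, II]
  exact Tm_arg_mem hκ (vinf_Sv hκ) y

lemma AA_abs_le (y : ℝ) : |AA κ y| ≤ bb κ := by
  rcases le_or_gt 0 y with hy | hy
  · have := AA_mem hκ hy
    rw [abs_of_nonneg this.1]
    exact this.2
  · have h0 : (0:ℝ) ≤ -y := by linarith
    have := AA_mem hκ h0
    rw [show y = -(-y) by ring, AA_odd hκ, abs_neg, abs_of_nonneg this.1]
    exact this.2

lemma cosAA_pos (y : ℝ) : 0 < Real.cos (AA κ y) := by
  apply Real.cos_pos_of_mem_Ioo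
  have h1 := AA_abs_le hκ y
  have h2 := bb_lt (κ := κ)
  have h3 := abs_le.1 h1
  have h4 := bb_pos hκ
  constructor <;> [linarith [h3.1]; linarith [h3.2]]

lemma VV_odd (y : ℝ) : VV κ (-y) = -VV κ y := by rw [VV, VV, AA_odd hκ, Real.tan_neg]

lemma VV_sq_abs (y : ℝ) : VV κ |y| ^ 2 = VV κ y ^ 2 := by
  rcases le_or_gt 0 y with hy | hy
  · rw [abs_of_nonneg hy]
  · rw [abs_of_neg hy, show -y = -(y) by ring, VV_odd hκ]
    ring

lemma VV_nonneg {y : ℝ} (hy : 0 ≤ y) : 0 ≤ VV κ y := by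
  rw [VV_eq_vinf hκ hy]
  exact ((vinf_Sv hκ).2 y).1

lemma VV_le_kappa (y : ℝ) : VV κ y ≤ κ := by
  rcases le_or_gt 0 y with hy | hy
  · rw [VV_eq_vinf hκ hy]
    exact ((vinf_Sv hκ).2 y).2
  · have h0 : (0:ℝ) ≤ -y := by linarith
    have h1 := VV_nonneg hκ h0
    rw [show y = -(-y) by ring, VV_odd hκ]
    linarith

lemma GG_hasDeriv (y : ℝ) : HasDerivAt (GG κ) (y / 2 * (1 + VV κ y ^ 2)) y := by
  have h := intervalIntegral.integral_hasDerivAt_right (GG_intInt hκ 0 y)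
    ((GG_integrand_cont hκ).stronglyMeasurableAtFilter _ _)
    (GG_integrand_cont hκ).continuousAt
  have hval : y / 2 * (1 + vinf κ |y| ^ 2) = y / 2 * (1 + VV κ y ^ 2) := by
    rw [← VV_eq_vinf hκ (abs_nonneg y), VV_sq_abs hκ]
  rwa [hval] at h

lemma EE_hasDeriv (y : ℝ) :
    HasDerivAt (EE κ) (-(y / 2 * (1 + VV κ y ^ 2)) * EE κ y) y := by
  have h := ((GG_hasDeriv hκ y).neg).exp
  have hshow : HasDerivAt (fun x => Real.exp (-GG κ x))
      (-(y / 2 * (1 + VV κ y ^ 2)) * EE κ y) y := by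
    refine h.congr_deriv ?_
    rw [EE, Pi.neg_apply]
    ring
  exact hshow

lemma AA_hasDeriv (y : ℝ) : HasDerivAt (AA κ) (cc κ / 2 * EE κ y) y := by
  have h := intervalIntegral.integral_hasDerivAt_right (EE_intInt hκ 0 y)
    ((EE_cont hκ).stronglyMeasurableAtFilter _ _) (EE_cont hκ).continuousAt
  exact h.const_mul _

lemma one_add_tan_sq_AA (y : ℝ) :
    1 + VV κ y ^ 2 = 1 / Real.cos (AA κ y) ^ 2 := by
  have hc := cosAA_pos hκ y
  rw [VV, Real.tan_eq_sin_div_cos]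
  have hs := Real.sin_sq_add_cos_sq (AA κ y)
  field_simp
  linarith

lemma VV_hasDeriv (y : ℝ) :
    HasDerivAt (VV κ) ((1 + VV κ y ^ 2) * (cc κ / 2 * EE κ y)) y := by
  have ht := Real.hasDerivAt_tan (ne_of_gt (cosAA_pos hκ y))
  have h := HasDerivAt.comp y ht (AA_hasDeriv hκ y)
  rw [one_add_tan_sq_AA hκ]
  exact h

lemma FF_hasDeriv (y : ℝ) :
    HasDerivAt (FF κ) (cc κ * (-(y / 2 * (1 + VV κ y ^ 2)) * EE κ y)) y :=
  (EE_hasDeriv hκ y).const_mul _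

lemma phiK_hasDeriv (y : ℝ) : HasDerivAt (phiK κ) (VV κ y) y := by
  have h2 : HasDerivAt (fun y => y * VV κ y)
      (1 * VV κ y + y * ((1 + VV κ y ^ 2) * (cc κ / 2 * EE κ y))) y :=
    (hasDerivAt_id y).mul (VV_hasDeriv hκ y)
  have h := (FF_hasDeriv hκ y).add h2
  have heq : cc κ * (-(y / 2 * (1 + VV κ y ^ 2)) * EE κ y)
      + (1 * VV κ y + y * ((1 + VV κ y ^ 2) * (cc κ / 2 * EE κ y))) = VV κ y := by ring
  rwa [heq] at h

lemma deriv_phiK : deriv (phiK κ) = VV κ :=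
  funext fun y => (phiK_hasDeriv hκ y).deriv

lemma J1_phiK (y : ℝ) : J1 (phiK κ) y = 0 := by
  have hpos : (0:ℝ) < 1 + VV κ y ^ 2 := by positivity
  rw [J1, deriv_phiK hκ]
  have h2 : deriv (VV κ) y = (1 + VV κ y ^ 2) * (cc κ / 2 * EE κ y) :=
    (VV_hasDeriv hκ y).deriv
  rw [h2, mul_div_cancel_left₀ _ (ne_of_gt hpos), phiK, FF]
  ring

lemma AA_cont : Continuous (AA κ) :=
  continuous_const.mul (intervalIntegral.continuous_primitive (fun a b => EE_intInt hκ a b) 0)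

lemma GG_AA_contDiff : ∀ n : ℕ, ContDiff ℝ n (GG κ) ∧ ContDiff ℝ n (AA κ) := by
  intro n
  induction n with
  | zero => exact ⟨contDiff_zero.2 (GG_cont hκ), contDiff_zero.2 (AA_cont hκ)⟩
  | succ n ih =>
    have hVn : ContDiff ℝ n (VV κ) := by
      refine contDiff_iff_contDiffAt.2 fun y => ?_
      exact ContDiffAt.comp y (Real.contDiffAt_tan.2 (ne_of_gt (cosAA_pos hκ y)))
        ih.2.contDiffAt
    constructor
    · refine (contDiff_succ_iff_deriv (n := (n : WithTop ℕ∞))).2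
        ⟨fun y => (GG_hasDeriv hκ y).differentiableAt, by simp, ?_⟩
      rw [show deriv (GG κ) = fun y => y / 2 * (1 + VV κ y ^ 2) from
        funext fun y => (GG_hasDeriv hκ y).deriv]
      exact ((contDiff_id.div_const 2).mul (contDiff_const.add (hVn.pow 2)))
    · refine (contDiff_succ_iff_deriv (n := (n : WithTop ℕ∞))).2
        ⟨fun y => (AA_hasDeriv hκ y).differentiableAt, by simp, ?_⟩
      rw [show deriv (AA κ) = fun y => cc κ / 2 * EE κ y from
        funext fun y => (AA_hasDeriv hκ y).deriv]
      exact contDiff_const.mul (ih.1.neg.exp)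

lemma phiK_contDiff : ContDiff ℝ (⊤ : ℕ∞) (phiK κ) := by
  have key : ∀ n : ℕ, ContDiff ℝ n (phiK κ) := by
    intro n
    have h := GG_AA_contDiff hκ n
    have hVn : ContDiff ℝ n (VV κ) := by
      refine contDiff_iff_contDiffAt.2 fun y => ?_
      exact ContDiffAt.comp y (Real.contDiffAt_tan.2 (ne_of_gt (cosAA_pos hκ y)))
        h.2.contDiffAt
    have hEn : ContDiff ℝ n (EE κ) := h.1.neg.exp
    exact (contDiff_const.mul hEn).add (contDiff_id.mul hVn)
  exact contDiff_infty.2 key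

lemma phiK_even (y : ℝ) : phiK κ (-y) = phiK κ y := by
  rw [phiK, phiK, FF, FF, EE_even hκ, VV_odd hκ]
  ring



/-! ### Part 3: estimates -/

/-- `D(y) = φ(y) - κ y`. -/
noncomputable def DD (κ : ℝ) (y : ℝ) : ℝ := phiK κ y - κ * y

lemma DD_hasDeriv (y : ℝ) : HasDerivAt (DD κ) (VV κ y - κ) y := by
  have h1 : HasDerivAt (fun y : ℝ => κ * y) κ y := by
    simpa using (hasDerivAt_id y).const_mul κ
  exact (phiK_hasDeriv hκ y).sub h1

lemma DD_anti : Antitone (DD κ) := by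
  apply antitone_of_deriv_nonpos (fun y => (DD_hasDeriv hκ y).differentiableAt)
  intro y
  rw [(DD_hasDeriv hκ y).deriv]
  linarith [VV_le_kappa hκ y]

lemma DD_eq (y : ℝ) : DD κ y = FF κ y - y * (κ - VV κ y) := by
  rw [DD, phiK]; ring

lemma DD_le_FF {y : ℝ} (hy : 0 ≤ y) : DD κ y ≤ FF κ y := by
  rw [DD_eq hκ]
  have h1 := VV_le_kappa hκ y
  nlinarith

lemma FF_le_gauss (y : ℝ) : FF κ y ≤ cc κ * Real.exp (-(1/4) * y ^ 2) :=
  mul_le_mul_of_nonneg_left (EE_le_gauss hκ y) (cc_pos hκ).le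

lemma DD_zero : DD κ 0 = cc κ := by
  rw [DD, phiK, FF, EE, GG, intervalIntegral.integral_same]
  simp

lemma DD_le_cc {y : ℝ} (hy : 0 ≤ y) : DD κ y ≤ cc κ := by
  have := DD_anti hκ hy
  rwa [DD_zero hκ] at this

lemma bb_sub_AA {y : ℝ} (hy : 0 ≤ y) :
    bb κ - AA κ y = cc κ / 2 * ∫ s in Set.Ioi y, EE κ s := by
  have hII := (II_pos hκ).ne'
  have hb : bb κ = cc κ / 2 * ∫ s in Set.Ioi (0:ℝ), EE κ s := by
    rw [II_eq hκ, cc]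
    field_simp
  have hsplit : (∫ s in Set.Ioi (0:ℝ), EE κ s)
      = (∫ s in Set.Ioc 0 y, EE κ s) + ∫ s in Set.Ioi y, EE κ s := by
    rw [← Set.Ioc_union_Ioi_eq_Ioi hy]
    exact setIntegral_union Set.Ioc_disjoint_Ioi_same measurableSet_Ioi
      ((EE_integrableOn hκ 0).mono_set Set.Ioc_subset_Ioi_self) (EE_integrableOn hκ y)
  have hAAy : AA κ y = cc κ / 2 * ∫ s in Set.Ioc 0 y, EE κ s := by
    rw [AA, intervalIntegral.integral_of_le hy]
  rw [hb, hAAy, hsplit]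
  ring

lemma xgauss_integrableOn (y : ℝ) :
    IntegrableOn (fun s : ℝ => s / 2 * Real.exp (-(1/4) * s ^ 2)) (Set.Ioi y) volume := by
  have h := integrable_mul_exp_neg_mul_sq (by norm_num : (0:ℝ) < 1/4)
  have h2 : (fun s : ℝ => s / 2 * Real.exp (-(1/4) * s ^ 2))
      = fun s => (1/2) * (s * Real.exp (-(1/4) * s ^ 2)) := by funext s; ring
  rw [h2]
  exact (h.const_mul _).integrableOn

lemma neg_quarter_sq_tendsto : Tendsto (fun y : ℝ => -(1/4) * y ^ 2) atTop atBot := by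
  have h1 : Tendsto (fun y : ℝ => y ^ 2) atTop atTop := tendsto_pow_atTop two_ne_zero
  have h2 : Tendsto (fun y : ℝ => (1/4) * y ^ 2) atTop atTop :=
    h1.const_mul_atTop (by norm_num)
  have h3 := tendsto_neg_atTop_atBot.comp h2
  refine h3.congr fun y => ?_
  simp

lemma gauss_tendsto_zero : Tendsto (fun y : ℝ => Real.exp (-(1/4) * y ^ 2)) atTop (𝓝 0) :=
  Real.tendsto_exp_atBot.comp (neg_quarter_sq_tendsto hκ)

lemma xgauss_integral {y : ℝ} :
    (∫ s in Set.Ioi y, s / 2 * Real.exp (-(1/4) * s ^ 2)) = Real.exp (-(1/4) * y ^ 2) := by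
  have hderiv : ∀ x ∈ Set.Ici y,
      HasDerivAt (fun s : ℝ => -Real.exp (-(1/4) * s ^ 2))
        (x / 2 * Real.exp (-(1/4) * x ^ 2)) x := by
    intro x _
    have h1 : HasDerivAt (fun s : ℝ => -(1/4) * s ^ 2) (-(1/4) * (2 * x ^ 1)) x :=
      (hasDerivAt_pow 2 x).const_mul _
    have h2 := h1.exp.neg
    refine h2.congr_deriv ?_
    ring
  have htend : Tendsto (fun s : ℝ => -Real.exp (-(1/4) * s ^ 2)) atTop (𝓝 0) := by
    have := (gauss_tendsto_zero hκ).neg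
    simpa using this
  have h := MeasureTheory.integral_Ioi_of_hasDerivAt_of_tendsto' hderiv
    (xgauss_integrableOn hκ y) htend
  rw [h]
  ring

lemma gauss_tail {y : ℝ} (hy : 0 < y) :
    (∫ s in Set.Ioi y, Real.exp (-(1/4) * s ^ 2)) ≤ 2 / y * Real.exp (-(1/4) * y ^ 2) := by
  have mono : (∫ s in Set.Ioi y, Real.exp (-(1/4) * s ^ 2))
      ≤ ∫ s in Set.Ioi y, 2 / y * (s / 2 * Real.exp (-(1/4) * s ^ 2)) := by
    apply setIntegral_mono_on (gauss_integrableOn _ (by norm_num) y)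
      ((xgauss_integrableOn hκ y).const_mul _) measurableSet_Ioi
    intro s hs
    have hs1 : y < s := hs
    have he : 0 < Real.exp (-(1/4) * s ^ 2) := Real.exp_pos _
    have h2 : 2 / y * (s / 2 * Real.exp (-(1/4) * s ^ 2))
        = (s / y) * Real.exp (-(1/4) * s ^ 2) := by field_simp
    rw [h2]
    have h3 : 1 ≤ s / y := (one_le_div hy).2 hs1.le
    nlinarith
  rw [MeasureTheory.integral_const_mul, xgauss_integral hκ] at mono
  exact mono

lemma EE_tail_le {y : ℝ} :
    (∫ s in Set.Ioi y, EE κ s) ≤ ∫ s in Set.Ioi y, Real.exp (-(1/4) * s ^ 2) := by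
  apply setIntegral_mono_on (EE_integrableOn hκ y)
    (gauss_integrableOn _ (by norm_num) y) measurableSet_Ioi
  intro s _
  exact EE_le_gauss hκ s

lemma EE_tail_nonneg (y : ℝ) : 0 ≤ ∫ s in Set.Ioi y, EE κ s :=
  setIntegral_nonneg measurableSet_Ioi (fun s _ => (EE_pos hκ s).le)

omit hκ in
lemma one_add_tan_sq' {θ : ℝ} (hc : Real.cos θ ≠ 0) :
    1 + Real.tan θ ^ 2 = 1 / Real.cos θ ^ 2 := by
  rw [Real.tan_eq_sin_div_cos]
  have hs := Real.sin_sq_add_cos_sq θ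
  field_simp
  linarith

lemma kappa_sub_VV {y : ℝ} (hy : 0 ≤ y) :
    κ - VV κ y ≤ (1 + κ ^ 2) * (bb κ - AA κ y) := by
  set q : ℝ → ℝ := fun θ => (1 + κ ^ 2) * θ - Real.tan θ with hq
  have hmono : MonotoneOn q (Set.Icc 0 (bb κ)) := by
    apply monotoneOn_of_deriv_nonneg (convex_Icc _ _)
    · intro θ hθ
      have hc : Real.cos θ ≠ 0 := ne_of_gt (cos_pos_of_mem_Icc_bb hθ)
      exact ((continuous_const.mul continuous_id).continuousAt.sub
        (Real.continuousAt_tan.2 hc)).continuousWithinAt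
    · intro θ hθ
      rw [interior_Icc] at hθ
      have hθ' : θ ∈ Set.Icc 0 (bb κ) := ⟨hθ.1.le, hθ.2.le⟩
      have hc : Real.cos θ ≠ 0 := ne_of_gt (cos_pos_of_mem_Icc_bb hθ')
      have hder : HasDerivAt q ((1 + κ ^ 2) - 1 / Real.cos θ ^ 2) θ := by
        have h1 : HasDerivAt (fun θ : ℝ => (1 + κ ^ 2) * θ) (1 + κ ^ 2) θ := by
          simpa using (hasDerivAt_id θ).const_mul (1 + κ ^ 2)
        exact h1.sub (Real.hasDerivAt_tan hc)
      exact hder.differentiableAt.differentiableWithinAt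
    · intro θ hθ
      rw [interior_Icc] at hθ
      have hθ' : θ ∈ Set.Icc 0 (bb κ) := ⟨hθ.1.le, hθ.2.le⟩
      have hc : Real.cos θ ≠ 0 := ne_of_gt (cos_pos_of_mem_Icc_bb hθ')
      have hder : HasDerivAt q ((1 + κ ^ 2) - 1 / Real.cos θ ^ 2) θ := by
        have h1 : HasDerivAt (fun θ : ℝ => (1 + κ ^ 2) * θ) (1 + κ ^ 2) θ := by
          simpa using (hasDerivAt_id θ).const_mul (1 + κ ^ 2)
        exact h1.sub (Real.hasDerivAt_tan hc)
      rw [hder.deriv]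
      rw [← one_add_tan_sq' hc]
      have ht0 : 0 ≤ Real.tan θ :=
        Real.tan_nonneg_of_nonneg_of_le_pi_div_two hθ'.1 (le_of_lt (lt_of_le_of_lt hθ'.2 bb_lt))
      have htκ : Real.tan θ ≤ κ := by
        have := Real.strictMonoOn_tan.monotoneOn (mem_Ioo_of_mem_Icc_bb hθ')
          (mem_Ioo_of_mem_Icc_bb (Set.right_mem_Icc.2 (bb_pos hκ).le)) hθ'.2
        rwa [tan_bb] at this
      nlinarith
  have hAAy := AA_mem hκ hy
  have hq1 : q (AA κ y) ≤ q (bb κ) :=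
    hmono hAAy (Set.right_mem_Icc.2 (bb_pos hκ).le) hAAy.2
  rw [hq] at hq1
  simp only at hq1
  rw [tan_bb] at hq1
  have : Real.tan (AA κ y) = VV κ y := rfl
  rw [this] at hq1
  nlinarith [hq1]

lemma gap_bound {y : ℝ} (hy : 0 < y) :
    κ - VV κ y ≤ (1 + κ ^ 2) * cc κ / y * Real.exp (-(1/4) * y ^ 2) := by
  have h1 := kappa_sub_VV hκ hy.le
  have h2 := bb_sub_AA hκ hy.le
  have h3 := le_trans (EE_tail_le hκ (y := y)) (gauss_tail hκ hy)
  have h4 := EE_tail_nonneg hκ y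
  have hc := cc_pos hκ
  have hκ2 : (0:ℝ) < 1 + κ ^ 2 := by positivity
  calc κ - VV κ y ≤ (1 + κ ^ 2) * (bb κ - AA κ y) := h1
  _ = (1 + κ ^ 2) * (cc κ / 2) * (∫ s in Set.Ioi y, EE κ s) := by rw [h2]; ring
  _ ≤ (1 + κ ^ 2) * (cc κ / 2) * (2 / y * Real.exp (-(1/4) * y ^ 2)) := by
      apply mul_le_mul_of_nonneg_left h3
      nlinarith
  _ = (1 + κ ^ 2) * cc κ / y * Real.exp (-(1/4) * y ^ 2) := by
      field_simp

lemma DD_tendsto : Tendsto (DD κ) atTop (𝓝 0) := by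
  have hFF : Tendsto (FF κ) atTop (𝓝 0) := by
    apply squeeze_zero (fun y => le_of_lt (mul_pos (cc_pos hκ) (EE_pos hκ y))) (FF_le_gauss hκ)
    have := (gauss_tendsto_zero hκ).const_mul (cc κ)
    simpa using this
  have hgap : Tendsto (fun y => y * (κ - VV κ y)) atTop (𝓝 0) := by
    apply squeeze_zero' (g := fun y => (1 + κ ^ 2) * cc κ * Real.exp (-(1/4) * y ^ 2))
    · filter_upwards [eventually_gt_atTop (0:ℝ)] with y hy
      have := VV_le_kappa hκ y
      nlinarith
    · filter_upwards [eventually_gt_atTop (0:ℝ)] with y hy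
      have h1 := gap_bound hκ hy
      have h2 : y * ((1 + κ ^ 2) * cc κ / y * Real.exp (-(1/4) * y ^ 2))
          = (1 + κ ^ 2) * cc κ * Real.exp (-(1/4) * y ^ 2) := by
        field_simp
      nlinarith [h1, hy]
    · have := (gauss_tendsto_zero hκ).const_mul ((1 + κ ^ 2) * cc κ)
      simpa using this
  have heq : DD κ = fun y => FF κ y - y * (κ - VV κ y) := funext fun y => DD_eq hκ y
  rw [heq]
  simpa using hFF.sub hgap

lemma DD_nonneg (y : ℝ) : 0 ≤ DD κ y := by
  apply le_of_tendsto (DD_tendsto hκ)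
  filter_upwards [eventually_ge_atTop y] with z hz
  exact DD_anti hκ hz

lemma sqrtpi_le_two : Real.sqrt π ≤ 2 := by
  have h := Real.sqrt_le_sqrt Real.pi_le_four
  rwa [sqrt_four] at h

lemma two_lt_e : (2:ℝ) < Real.exp 1 := by
  have := Real.add_one_lt_exp (by norm_num : (1:ℝ) ≠ 0)
  linarith

lemma cc_le : cc κ ≤ Real.sqrt π * (1 + κ) := by
  have hI := Iv_ge (vinf_Sv hκ)
  have hb2 : bb κ ≤ π / 2 := (bb_lt).le
  have hsq : (0:ℝ) < Real.sqrt (π / (1 + κ ^ 2)) := Real.sqrt_pos.2 (by positivity)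
  have h1 : cc κ ≤ π / Real.sqrt (π / (1 + κ ^ 2)) := by
    rw [cc, II]
    apply div_le_div₀ Real.pi_pos.le (by linarith) hsq hI
  have h2 : π / Real.sqrt (π / (1 + κ ^ 2)) = Real.sqrt π * Real.sqrt (1 + κ ^ 2) := by
    rw [Real.sqrt_div Real.pi_pos.le, div_div_eq_mul_div, mul_comm π, mul_div_assoc,
      Real.div_sqrt]
    ring
  have h3 : Real.sqrt (1 + κ ^ 2) ≤ 1 + κ := by
    have h := Real.sqrt_le_sqrt (show 1 + κ ^ 2 ≤ (1 + κ) ^ 2 by nlinarith)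
    rwa [Real.sqrt_sq (by positivity)] at h
  have h4 : (0:ℝ) ≤ Real.sqrt π := Real.sqrt_nonneg _
  nlinarith [h1, h2, h3]

lemma cc_le' : cc κ ≤ 2 * (1 + κ) := by
  have h1 := cc_le hκ
  have h2 := sqrtpi_le_two hκ
  nlinarith [Real.sqrt_nonneg π]

/-- The barrier function. -/
noncomputable def psi (κ : ℝ) (y : ℝ) : ℝ :=
  2 * Real.exp 1 * (κ + 2) / y * Real.exp (-(1/4) * y ^ 2)

noncomputable def psi' (κ : ℝ) (y : ℝ) : ℝ :=
  2 * Real.exp 1 * (κ + 2) * Real.exp (-(1/4) * y ^ 2) * (-(1 / y ^ 2) - 1/2)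

noncomputable def psi'' (κ : ℝ) (y : ℝ) : ℝ :=
  2 * Real.exp 1 * (κ + 2) * Real.exp (-(1/4) * y ^ 2) * (2 / y ^ 3 + 1 / (2 * y) + y / 4)

omit hκ in
lemma gaussDeriv (x : ℝ) : HasDerivAt (fun s : ℝ => Real.exp (-(1/4) * s ^ 2))
    (Real.exp (-(1/4) * x ^ 2) * (-(1/4) * (2 * x ^ 1))) x :=
  ((hasDerivAt_pow 2 x).const_mul (-(1/4))).exp

omit hκ in
lemma psi_hasDeriv {y : ℝ} (hy : y ≠ 0) : HasDerivAt (psi κ) (psi' κ y) y := by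
  have h1 : HasDerivAt (fun y : ℝ => 2 * Real.exp 1 * (κ + 2) / y)
      (-(2 * Real.exp 1 * (κ + 2)) / y ^ 2) y := by
    have h := (hasDerivAt_inv hy).const_mul (2 * Real.exp 1 * (κ + 2))
    have heq : (fun y : ℝ => 2 * Real.exp 1 * (κ + 2) * y⁻¹)
        = fun y : ℝ => 2 * Real.exp 1 * (κ + 2) / y := by
      funext z; rw [div_eq_mul_inv]
    rw [heq] at h
    refine h.congr_deriv ?_
    field_simp
  have h := h1.mul (gaussDeriv y)
  refine h.congr_deriv ?_
  rw [psi']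
  field_simp
  ring

omit hκ in
lemma psi'_hasDeriv {y : ℝ} (hy : y ≠ 0) : HasDerivAt (psi' κ) (psi'' κ y) y := by
  have h1 : HasDerivAt (fun y : ℝ => 2 * Real.exp 1 * (κ + 2) * Real.exp (-(1/4) * y ^ 2))
      (2 * Real.exp 1 * (κ + 2) * (Real.exp (-(1/4) * y ^ 2) * (-(1/4) * (2 * y ^ 1)))) y :=
    (gaussDeriv y).const_mul _
  have h2 : HasDerivAt (fun y : ℝ => -(1 / y ^ 2) - 1/2) (2 / y ^ 3) y := by
    have h3 := (((hasDerivAt_pow 2 y).inv (pow_ne_zero 2 hy)).neg).sub_const (1/2:ℝ)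
    have heq : (fun y : ℝ => (-(fun x : ℝ => x ^ 2)⁻¹) y - 1/2) = fun y : ℝ => -(1 / y ^ 2) - 1/2 := by
      funext z; simp [one_div]
    rw [heq] at h3
    refine h3.congr_deriv ?_
    field_simp
    ring
  have h := h1.mul h2
  refine h.congr_deriv ?_
  rw [psi'']
  field_simp
  ring

lemma psi_tendsto : Tendsto (psi κ) atTop (𝓝 0) := by
  have h1 : Tendsto (fun y : ℝ => 2 * Real.exp 1 * (κ + 2) / y) atTop (𝓝 0) :=
    tendsto_const_nhds.div_atTop tendsto_id
  have h := h1.mul (gauss_tendsto_zero hκ)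
  show Tendsto (fun y : ℝ => 2 * Real.exp 1 * (κ + 2) / y * Real.exp (-(1/4) * y ^ 2))
    atTop (𝓝 0)
  simpa using h

omit hκ in
/-- At an interior local maximum, the first derivative vanishes and the second is nonpositive. -/
lemma isLocalMax_second_deriv {f f' f'' : ℝ → ℝ} {a m : ℝ} (ham : a < m)
    (hf : ∀ x, a < x → HasDerivAt f (f' x) x) (hf' : ∀ x, a < x → HasDerivAt f' (f'' x) x)
    (hmax : IsLocalMax f m) : f' m = 0 ∧ f'' m ≤ 0 := by
  have hf'm : f' m = 0 := by
    have h := hmax.deriv_eq_zero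
    rwa [(hf m ham).deriv] at h
  refine ⟨hf'm, ?_⟩
  by_contra hpos
  push_neg at hpos
  have hslope : Tendsto (slope f' m) (𝓝[>] m) (𝓝 (f'' m)) :=
    (hasDerivAt_iff_tendsto_slope.1 (hf' m ham)).mono_left
      (nhdsWithin_mono m (fun z hz => ne_of_gt hz))
  have hev : ∀ᶠ z in 𝓝[>] m, 0 < slope f' m z := hslope.eventually (eventually_gt_nhds hpos)
  have hev2 : ∀ᶠ z in 𝓝[>] m, 0 < f' z := by
    filter_upwards [hev, self_mem_nhdsWithin] with z h1 h2
    have hz : m < z := h2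
    rw [slope_def_field, hf'm, sub_zero] at h1
    rcases div_pos_iff.1 h1 with ⟨hp, _⟩ | ⟨_, hneg⟩
    · exact hp
    · linarith [sub_pos.2 hz]
  rw [eventually_nhdsWithin_iff] at hev2
  obtain ⟨ε1, hε1, h1⟩ := Metric.eventually_nhds_iff.1 hev2
  obtain ⟨ε2, hε2, h2⟩ := Metric.eventually_nhds_iff.1 hmax
  set r := min ε1 ε2 / 2 with hr
  have hr0 : 0 < r := by positivity
  have hrε1 : r < ε1 := by
    have := min_le_left ε1 ε2
    simp only [hr]
    linarith
  have hrε2 : r < ε2 := by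
    have := min_le_right ε1 ε2
    simp only [hr]
    linarith
  have hmono : StrictMonoOn f (Set.Icc m (m + r)) := by
    apply strictMonoOn_of_deriv_pos (convex_Icc _ _)
    · intro z hz
      exact ((hf z (lt_of_lt_of_le ham hz.1)).continuousAt).continuousWithinAt
    · intro z hz
      rw [interior_Icc] at hz
      have hz1 : m < z := hz.1
      have hz2 : z < m + r := hz.2
      have hdist : dist z m < ε1 := by
        rw [Real.dist_eq, abs_of_pos (sub_pos.2 hz1)]
        linarith
      rw [(hf z (by linarith)).deriv]
      exact h1 hdist hz1
  have hlt : f m < f (m + r) :=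
    hmono (Set.left_mem_Icc.2 (by linarith)) (Set.right_mem_Icc.2 (by linarith)) (by linarith)
  have hle : f (m + r) ≤ f m := by
    apply h2
    rw [Real.dist_eq]
    rw [show m + r - m = r by ring, abs_of_pos hr0]
    exact hrε2
  linarith

lemma DD_le_psi {y : ℝ} (hy : 2 < y) : DD κ y ≤ psi κ y := by
  by_contra hcon
  push_neg at hcon
  set h : ℝ → ℝ := fun z => DD κ z - psi κ z with hh
  have hy0 : 0 < h y := by simp only [hh]; linarith
  have hccE := cc_le' hκ
  have he := two_lt_e hκ
  have hcc := cc_pos hκ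
  -- h 2 < 0
  have hpsi2 : psi κ 2 = κ + 2 := by
    rw [psi, show -(1/4) * (2:ℝ) ^ 2 = -1 by norm_num,
      show 2 * Real.exp 1 * (κ + 2) / 2 = (κ + 2) * Real.exp 1 by ring, mul_assoc,
      ← Real.exp_add]
    norm_num
  have hD2 : DD κ 2 ≤ cc κ * Real.exp (-1) := by
    have h1 := DD_le_FF hκ (by norm_num : (0:ℝ) ≤ 2)
    have h2 : EE κ 2 ≤ Real.exp (-1) := by
      rw [EE, Real.exp_le_exp]
      have := GG_ge hκ 2
      norm_num at this ⊢
      linarith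
    have h3 : FF κ 2 ≤ cc κ * Real.exp (-1) := mul_le_mul_of_nonneg_left h2 hcc.le
    linarith
  have hexpneg : Real.exp (-1) * Real.exp 1 = 1 := by
    rw [← Real.exp_add]; norm_num
  have h2neg : h 2 < 0 := by
    simp only [hh, hpsi2]
    have hen : 0 < Real.exp (-1) := Real.exp_pos _
    have hhalf : Real.exp (-1) < 1/2 := by nlinarith [mul_lt_mul_of_pos_left he hen]
    have hb1 : cc κ * Real.exp (-1) ≤ 2 * (1 + κ) * Real.exp (-1) :=
      mul_le_mul_of_nonneg_right hccE hen.le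
    have hb2 : 2 * (1 + κ) * Real.exp (-1) < 2 * (1 + κ) * (1/2) :=
      mul_lt_mul_of_pos_left hhalf (by linarith)
    have hfin : cc κ * Real.exp (-1) < κ + 2 := by nlinarith
    linarith
  have htendsto : Tendsto h atTop (𝓝 0) := by
    have := (DD_tendsto hκ).sub (psi_tendsto hκ)
    simpa using this
  obtain ⟨Y0, hY0⟩ := eventually_atTop.1 (htendsto.eventually_lt_const hy0)
  set Y := max Y0 y with hYdef
  have hYy : y ≤ Y := le_max_right _ _
  have hY2 : (2:ℝ) ≤ Y := by linarith
  have hcont : ContinuousOn h (Set.Icc 2 Y) := by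
    intro z hz
    have hz0 : z ≠ 0 := by
      have := hz.1
      intro hcontra
      rw [hcontra] at this
      norm_num at this
    exact (((DD_hasDeriv hκ z).differentiableAt.continuousAt).sub
      (psi_hasDeriv hz0).continuousAt).continuousWithinAt
  obtain ⟨mx, hmx_mem, hmx⟩ := (isCompact_Icc).exists_isMaxOn
    (Set.nonempty_Icc.2 hY2) hcont
  have hhm : h y ≤ h mx := hmx ⟨hy.le, hYy⟩
  have hmx_pos : 0 < h mx := lt_of_lt_of_le hy0 hhm
  have hmx_gt2 : 2 < mx := by
    rcases lt_or_eq_of_le hmx_mem.1 with hl | he2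
    · exact hl
    · exfalso
      rw [← he2] at hmx_pos
      linarith
  -- local max
  have hloc : IsLocalMax h mx := by
    have hopen : IsOpen (Set.Ioo (2:ℝ) (Y+1)) := isOpen_Ioo
    refine Filter.eventually_of_mem (hopen.mem_nhds ⟨hmx_gt2, by linarith [hmx_mem.2]⟩) ?_
    intro z hz
    rcases le_or_gt z Y with hzY | hzY
    · exact hmx ⟨hz.1.le, hzY⟩
    · have hzz := hY0 z (le_trans (le_max_left _ _) hzY.le)
      linarith
  have hkderiv : ∀ z : ℝ, HasDerivAt (fun z : ℝ => κ * z) κ z := fun z => by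
    simpa using (hasDerivAt_id z).const_mul κ
  have hder1 : ∀ z, 2 < z → HasDerivAt h (VV κ z - κ - psi' κ z) z := by
    intro z hz
    exact ((phiK_hasDeriv hκ z).sub (hkderiv z)).sub (psi_hasDeriv (by linarith))
  have hder2 : ∀ z, 2 < z → HasDerivAt (fun z => VV κ z - κ - psi' κ z)
      ((1 + VV κ z ^ 2) * (cc κ / 2 * EE κ z) - psi'' κ z) z := by
    intro z hz
    exact (((VV_hasDeriv hκ z).sub_const κ).sub (psi'_hasDeriv (by linarith)))
  obtain ⟨hfirst, hsecond⟩ := isLocalMax_second_deriv hmx_gt2 hder1 hder2 hloc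
  set m := mx with hmdef
  have hm0 : 0 < m := by linarith
  have hV : VV κ m = κ + psi' κ m := by linarith [hfirst]
  -- supersolution computation
  have final : psi'' κ m ≤ (psi κ m - m * psi' κ m) / 2 := by
    rw [psi, psi', psi'']
    have hCE : 0 < 2 * Real.exp 1 * (κ + 2) * Real.exp (-(1/4) * m ^ 2) := by positivity
    have hAB : 2 / m ^ 3 + 1 / (2 * m) + m / 4
        ≤ (1 / m - m * (-(1 / m ^ 2) - 1/2)) / 2 := by
      have e1 : (1 / m - m * (-(1 / m ^ 2) - 1/2)) / 2 = 1 / m + m / 4 := by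
        field_simp
        ring
      rw [e1]
      have e2 : 2 / m ^ 3 ≤ 1 / (2 * m) := by
        rw [div_le_div_iff₀ (by positivity) (by positivity)]
        nlinarith
      have e3 : (1:ℝ) / m = 1 / (2 * m) + 1 / (2 * m) := by
        field_simp
        norm_num
      linarith
    calc 2 * Real.exp 1 * (κ + 2) * Real.exp (-(1/4) * m ^ 2)
          * (2 / m ^ 3 + 1 / (2 * m) + m / 4)
        ≤ 2 * Real.exp 1 * (κ + 2) * Real.exp (-(1/4) * m ^ 2)
          * ((1 / m - m * (-(1 / m ^ 2) - 1/2)) / 2) :=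
          mul_le_mul_of_nonneg_left hAB hCE.le
    _ = (2 * Real.exp 1 * (κ + 2) / m * Real.exp (-(1/4) * m ^ 2)
          - m * (2 * Real.exp 1 * (κ + 2) * Real.exp (-(1/4) * m ^ 2)
            * (-(1 / m ^ 2) - 1/2))) / 2 := by
        field_simp
  have hFFm : cc κ * EE κ m = phiK κ m - m * VV κ m := by
    rw [phiK, FF]; ring
  have hgt : psi κ m + κ * m < phiK κ m := by
    have : 0 < h m := hmx_pos
    simp only [hh, DD] at this
    linarith
  have hP : 1 ≤ 1 + VV κ m ^ 2 := by nlinarith [sq_nonneg (VV κ m)]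
  have hEpos : 0 < cc κ / 2 * EE κ m := by
    have := EE_pos hκ m
    positivity
  have c1 : cc κ / 2 * EE κ m ≤ psi'' κ m := by
    have := le_mul_of_one_le_left hEpos.le hP
    linarith [hsecond, this]
  have c2 : cc κ / 2 * EE κ m = (phiK κ m - m * VV κ m) / 2 := by
    rw [← hFFm]; ring
  have hm' : 0 < phiK κ m - κ * m - psi κ m := by
    have hpos := hmx_pos
    simp only [hh, DD] at hpos
    linarith
  have c3 : (psi κ m - m * psi' κ m) / 2 < (phiK κ m - m * VV κ m) / 2 := by
    rw [hV]
    linarith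
  linarith [final, c1, c2, c3]

lemma DD_le_bound {y : ℝ} (hy : 0 < y) :
    DD κ y ≤ min (2 * Real.exp 1 * (κ + 2) / y * Real.exp (-(y ^ 2) / 4)) (3 * κ + 2) := by
  have hexp : Real.exp (-(y ^ 2) / 4) = Real.exp (-(1/4) * y ^ 2) := by
    rw [show -(y ^ 2) / 4 = -(1/4) * y ^ 2 by ring]
  refine le_min ?_ ?_
  · rw [hexp]
    rcases le_or_gt y 2 with h2 | h2
    · have hD := le_trans (DD_le_FF hκ hy.le) (FF_le_gauss hκ y)
      have hcc' := cc_le' hκ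
      have he := two_lt_e hκ
      have hc : cc κ * y ≤ 2 * Real.exp 1 * (κ + 2) := by nlinarith [cc_pos hκ]
      have hstep : cc κ * Real.exp (-(1/4) * y ^ 2)
          ≤ 2 * Real.exp 1 * (κ + 2) / y * Real.exp (-(1/4) * y ^ 2) := by
        apply mul_le_mul_of_nonneg_right _ (Real.exp_pos _).le
        rw [le_div_iff₀ hy]
        linarith
      linarith
    · have := DD_le_psi hκ h2
      rwa [psi] at this
  · have h1 := DD_le_cc hκ hy.le
    have h2 := cc_le' hκ
    linarith

lemma phiK_div_tendsto : Tendsto (fun y => phiK κ y / y) atTop (𝓝 κ) := by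
  have h2 : Tendsto (fun y => DD κ y / y) atTop (𝓝 0) := by
    apply squeeze_zero' (g := fun y => cc κ / y)
    · filter_upwards [eventually_gt_atTop (0:ℝ)] with y hy
      exact div_nonneg (DD_nonneg hκ y) hy.le
    · filter_upwards [eventually_gt_atTop (0:ℝ)] with y hy
      exact (div_le_div_iff_of_pos_right hy).2 (DD_le_cc hκ hy.le)
    · exact tendsto_const_nhds.div_atTop tendsto_id
  have h1 : ∀ᶠ y in atTop, κ + DD κ y / y = phiK κ y / y := by
    filter_upwards [eventually_gt_atTop (0:ℝ)] with y hy
    rw [DD]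
    field_simp
    ring
  have h3 : Tendsto (fun y => κ + DD κ y / y) atTop (𝓝 κ) := by
    have hadd := (tendsto_const_nhds (x := κ) (f := atTop (α := ℝ))).add h2
    simpa using hadd
  exact Tendsto.congr' h1 h3

end Stmt5Aux

/-- For `κ > 0` there exists a smooth even function `φ̂_κ : ℝ → ℝ` solving `𝒥₁ φ̂_κ = 0`
everywhere with `0 ≤ φ̂_κ(y) - κ y ≤ min{ (2e(κ+2)/y) e^{-y²/4}, 3κ+2 }` for `y ∈ (0,∞)`;
in particular `φ̂_κ(y)/y → κ` as `y → ∞`. -/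
theorem stmt5 (κ : ℝ) (hκ : 0 < κ) :
    ∃ φ : ℝ → ℝ, ContDiff ℝ (⊤ : ℕ∞) φ ∧ (∀ y : ℝ, φ (-y) = φ y) ∧
      (∀ y : ℝ, J1 φ y = 0) ∧
      (∀ y : ℝ, 0 < y → 0 ≤ φ y - κ * y ∧
        φ y - κ * y ≤
          min (2 * Real.exp 1 * (κ + 2) / y * Real.exp (-(y ^ 2) / 4)) (3 * κ + 2)) ∧
      Filter.Tendsto (fun y : ℝ => φ y / y) Filter.atTop (nhds κ) := by
  refine ⟨Stmt5Aux.phiK κ, Stmt5Aux.phiK_contDiff hκ, fun y => Stmt5Aux.phiK_even hκ y,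
    fun y => Stmt5Aux.J1_phiK hκ y, fun y hy => ⟨Stmt5Aux.DD_nonneg hκ y,
      Stmt5Aux.DD_le_bound hκ hy⟩, Stmt5Aux.phiK_div_tendsto hκ⟩
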